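/- Let 0 < s < 1 and μ a nonnegative integrable function supported on [-1,-λ]∪[λ,1] with λ ∈ (0,1). If ∫_{supp μ}(|x-y|^{-s} μ(y)) dy = (3/(1-s))x² holds for x in an interval [λ,1], and we set ε = 1-λ, then the total mass satisfies ∫ μ ≤ 6 ε^s. -/

import Mathlib

open MeasureTheory intervalIntegral
open scoped ENNReal

open MeasureTheory intervalIntegral
open scoped ENNReal

lemma aux_abs_rpow_int {s : ℝ} (hs1 : s < 1) {t : ℝ} (ht : 0 ≤ t) :
    IntervalIntegrable (fun u : ℝ => |u| ^ (-s)) volume 0 t ∧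
      (∫ u in (0:ℝ)..t, |u| ^ (-s)) = t ^ (1 - s) / (1 - s) := by
  have hr : (-1 : ℝ) < -s := by linarith
  have heq : Set.EqOn (fun u : ℝ => u ^ (-s)) (fun u : ℝ => |u| ^ (-s)) (Set.uIcc 0 t) := by
    intro u hu
    rw [Set.uIcc_of_le ht] at hu
    simp [abs_of_nonneg hu.1]
  constructor
  · refine (intervalIntegrable_rpow' hr).congr ?_
    intro u hu
    exact heq (Set.uIoc_subset_uIcc hu)
  · rw [← intervalIntegral.integral_congr heq, integral_rpow (Or.inl hr)]
    rw [show -s + 1 = 1 - s by ring, Real.zero_rpow (by linarith)]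
    ring

-- negative side: integrability and value on [t,0] for t ≤ 0
lemma aux_abs_rpow_int_neg {s : ℝ} (hs1 : s < 1) {t : ℝ} (ht : t ≤ 0) :
    IntervalIntegrable (fun u : ℝ => |u| ^ (-s)) volume t 0 ∧
      (∫ u in t..(0:ℝ), |u| ^ (-s)) = (-t) ^ (1 - s) / (1 - s) := by
  have h0 : (0:ℝ) ≤ -t := by linarith
  obtain ⟨hI, hV⟩ := aux_abs_rpow_int hs1 h0
  have hcomp : (fun u : ℝ => |u| ^ (-s)) = fun u : ℝ => |(-u)| ^ (-s) := by
    funext u; rw [abs_neg]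
  constructor
  · have := (IntervalIntegrable.iff_comp_neg).mp hI
    simpa [hcomp] using this.symm
  · have := intervalIntegral.integral_comp_neg (a := 0) (b := -t) (fun u : ℝ => |u| ^ (-s))
    rw [neg_neg, neg_zero] at this
    calc (∫ u in t..(0:ℝ), |u| ^ (-s)) = ∫ u in (0:ℝ)..(-t), |(-u)| ^ (-s) := by
          rw [this]
      _ = ∫ u in (0:ℝ)..(-t), |u| ^ (-s) := by simp only [abs_neg]
      _ = (-t) ^ (1 - s) / (1 - s) := hV

-- kernel on [lam,1] shifted at y
lemma aux_kernel {s lam : ℝ} (hs1 : s < 1) (hlam1 : lam ≤ 1) {y : ℝ}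
    (hy : y ∈ Set.Icc lam 1) :
    IntervalIntegrable (fun x : ℝ => |x - y| ^ (-s)) volume lam 1 ∧
      (∫ x in lam..(1:ℝ), |x - y| ^ (-s))
        = ((y - lam) ^ (1 - s) + (1 - y) ^ (1 - s)) / (1 - s) := by
  obtain ⟨hy1, hy2⟩ := hy
  obtain ⟨hIneg, hVneg⟩ := aux_abs_rpow_int_neg hs1 (t := lam - y) (by linarith)
  obtain ⟨hIpos, hVpos⟩ := aux_abs_rpow_int hs1 (t := 1 - y) (by linarith)
  have hIneg' : IntervalIntegrable (fun x : ℝ => |x - y| ^ (-s)) volume lam y := by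
    have := hIneg.comp_sub_right y
    simpa using this
  have hIpos' : IntervalIntegrable (fun x : ℝ => |x - y| ^ (-s)) volume y 1 := by
    have := hIpos.comp_sub_right y
    simpa using this
  refine ⟨hIneg'.trans hIpos', ?_⟩
  rw [← intervalIntegral.integral_add_adjacent_intervals hIneg' hIpos']
  have e1 : (∫ x in lam..y, |x - y| ^ (-s)) = ∫ u in (lam - y)..(0:ℝ), |u| ^ (-s) := by
    have := intervalIntegral.integral_comp_sub_right (a := lam) (b := y)
      (fun u : ℝ => |u| ^ (-s)) y
    simpa using this
  have e2 : (∫ x in y..(1:ℝ), |x - y| ^ (-s)) = ∫ u in (0:ℝ)..(1 - y), |u| ^ (-s) := by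
    have := intervalIntegral.integral_comp_sub_right (a := y) (b := 1)
      (fun u : ℝ => |u| ^ (-s)) y
    simpa using this
  rw [e1, e2, hVneg, hVpos, neg_sub]
  ring

lemma aux_superadd {p a b : ℝ} (hp0 : 0 ≤ p) (hp1 : p ≤ 1) (ha : 0 ≤ a) (hb : 0 ≤ b) :
    (a + b) ^ p ≤ a ^ p + b ^ p := by
  have h := NNReal.rpow_add_le_add_rpow a.toNNReal b.toNNReal hp0 hp1
  calc (a + b) ^ p = ((a.toNNReal + b.toNNReal : NNReal) : ℝ) ^ p := by
        rw [← Real.toNNReal_add ha hb, Real.coe_toNNReal _ (by linarith)]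
    _ = (((a.toNNReal + b.toNNReal) ^ p : NNReal) : ℝ) := by
        rw [NNReal.coe_rpow]
    _ ≤ ((a.toNNReal ^ p + b.toNNReal ^ p : NNReal) : ℝ) := by exact_mod_cast h
    _ = a ^ p + b ^ p := by
        push_cast
        rw [Real.coe_toNNReal _ ha, Real.coe_toNNReal _ hb]


theorem stmt9 (s lam : ℝ) (hs0 : 0 < s) (hs1 : s < 1) (hlam : lam ∈ Set.Ioo (0:ℝ) 1)
    (μ : ℝ → ℝ) (hpos : ∀ x, 0 ≤ μ x)
    (hint : Integrable μ)
    (hsupp : ∀ x ∉ Set.Icc (-1:ℝ) (-lam) ∪ Set.Icc lam 1, μ x = 0)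
    (hsym : ∀ x, μ (-x) = μ x)
    (hEL : ∀ x ∈ Set.Icc lam 1,
      (∫ y in Set.Icc (-1:ℝ) (-lam) ∪ Set.Icc lam 1, |x - y| ^ (-s) * μ y)
        = 3 / (1 - s) * x ^ 2) :
    (∫ x, μ x) ≤ 6 * (1 - lam) ^ s := by
  obtain ⟨hl0, hl1⟩ := hlam
  set I : Set ℝ := Set.Icc lam 1 with hI
  set J : Set ℝ := Set.Icc (-1:ℝ) (-lam) with hJ
  have hll : lam ≤ 1 := le_of_lt hl1
  have h1s : (0:ℝ) < 1 - s := by linarith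
  have hε : (0:ℝ) < 1 - lam := by linarith
  have knn : ∀ x y : ℝ, 0 ≤ |x - y| ^ (-s) * μ y := fun x y =>
    mul_nonneg (Real.rpow_nonneg (abs_nonneg _) _) (hpos y)
  set m : ℝ := ∫ y in I, μ y with hm
  -- symmetry
  have hJI : (∫ y in J, μ y) = m := by
    have h1 : (∫ x in lam..1, μ (-x)) = ∫ x in (-1:ℝ)..(-lam), μ x := by
      simpa using intervalIntegral.integral_comp_neg (a := lam) (b := 1) μ
    simp only [hsym] at h1
    rw [hJ, hm, hI, MeasureTheory.integral_Icc_eq_integral_Ioc,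
      MeasureTheory.integral_Icc_eq_integral_Ioc,
      ← intervalIntegral.integral_of_le (by linarith : (-1:ℝ) ≤ -lam),
      ← intervalIntegral.integral_of_le hll, h1]
  -- integrability of the EL integrand
  have hU : ∀ x ∈ I, IntegrableOn (fun y => |x - y| ^ (-s) * μ y) (J ∪ I) volume := by
    intro x hx
    by_contra h
    have h2 := hEL x hx
    rw [integral_undef h] at h2
    have hx0 : 0 < x := lt_of_lt_of_le hl0 hx.1
    have : 0 < 3 / (1 - s) * x ^ 2 := mul_pos (div_pos (by norm_num) h1s) (pow_pos hx0 2)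
    linarith
  have hdisj : Disjoint J I := by
    rw [Set.disjoint_left]
    intro y hyJ hyI
    have := hyJ.2; have := hyI.1; linarith
  -- bound on the one-sided integral
  have hbound : ∀ x ∈ I, (∫ y in I, |x - y| ^ (-s) * μ y) ≤ 3 / (1 - s) := by
    intro x hx
    have h2 := hEL x hx
    rw [MeasureTheory.setIntegral_union hdisj measurableSet_Icc
      ((hU x hx).mono_set Set.subset_union_left)
      ((hU x hx).mono_set Set.subset_union_right)] at h2
    have h3 : 0 ≤ ∫ y in J, |x - y| ^ (-s) * μ y :=
      setIntegral_nonneg measurableSet_Icc fun y _ => knn x y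
    have hx2 : x ^ 2 ≤ 1 := by nlinarith [hx.1, hx.2]
    have h4 : 3 / (1 - s) * x ^ 2 ≤ 3 / (1 - s) * 1 :=
      mul_le_mul_of_nonneg_left hx2 (le_of_lt (div_pos (by norm_num) h1s))
    linarith
  -- measurable representative
  have hgm := hint.1.stronglyMeasurable_mk
  have hg : μ =ᵐ[volume] hint.1.mk μ := hint.1.ae_eq_mk
  set g : ℝ → ℝ := hint.1.mk μ with hgdef
  set F : ℝ → ℝ → ℝ≥0∞ :=
    fun x y => ENNReal.ofReal (|x - y| ^ (-s)) * ENNReal.ofReal (g y) with hF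
  have hFmeas : Measurable (Function.uncurry F) := by
    refine Measurable.mul (f := fun p : ℝ × ℝ => ENNReal.ofReal (|p.1 - p.2| ^ (-s)))
      (g := fun p : ℝ × ℝ => ENNReal.ofReal (g p.2)) ?_ ?_
    · exact ((measurable_fst.sub measurable_snd).abs.pow_const _).ennreal_ofReal
    · exact (hgm.measurable.comp measurable_snd).ennreal_ofReal
  -- upper bound
  have key1 : ∀ x ∈ I, (∫⁻ y in I, F x y) ≤ ENNReal.ofReal (3 / (1 - s)) := by
    intro x hx
    have hint' : IntegrableOn (fun y => |x - y| ^ (-s) * μ y) I volume :=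
      (hU x hx).mono_set Set.subset_union_right
    have e : (∫⁻ y in I, F x y) = ENNReal.ofReal (∫ y in I, |x - y| ^ (-s) * μ y) := by
      rw [ofReal_integral_eq_lintegral_ofReal hint'
        (Filter.Eventually.of_forall fun y => knn x y)]
      apply lintegral_congr_ae
      filter_upwards [hg.restrict (s := I)] with y hy
      simp only [hF]
      rw [← hy, ENNReal.ofReal_mul (Real.rpow_nonneg (abs_nonneg _) _)]
    rw [e]
    exact ENNReal.ofReal_le_ofReal (hbound x hx)
  have key2 : (∫⁻ x in I, ∫⁻ y in I, F x y) ≤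
      ENNReal.ofReal (3 / (1 - s)) * ENNReal.ofReal (1 - lam) := by
    calc (∫⁻ x in I, ∫⁻ y in I, F x y) ≤ ∫⁻ _x in I, ENNReal.ofReal (3 / (1 - s)) := by
          refine lintegral_mono_ae ?_
          exact (ae_restrict_iff' measurableSet_Icc).mpr (Filter.Eventually.of_forall key1)
      _ = ENNReal.ofReal (3 / (1 - s)) * volume I := setLIntegral_const I _
      _ = ENNReal.ofReal (3 / (1 - s)) * ENNReal.ofReal (1 - lam) := by
          rw [hI, Real.volume_Icc]
  have hswap : (∫⁻ x in I, ∫⁻ y in I, F x y) = ∫⁻ y in I, ∫⁻ x in I, F x y :=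
    lintegral_lintegral_swap hFmeas.aemeasurable
  -- lower bound on inner kernel integral
  set d : ℝ := (1 - lam) ^ (1 - s) / (1 - s) with hd
  have hdpos : 0 < d := div_pos (Real.rpow_pos_of_pos hε _) h1s
  have key3 : ∀ y ∈ I, ENNReal.ofReal d * ENNReal.ofReal (g y) ≤ ∫⁻ x in I, F x y := by
    intro y hy
    obtain ⟨hki, hkv⟩ := aux_kernel hs1 hll hy
    have hki' : IntegrableOn (fun x => |x - y| ^ (-s)) I volume := by
      rw [hI, integrableOn_Icc_iff_integrableOn_Ioc]
      exact (intervalIntegrable_iff_integrableOn_Ioc_of_le hll).mp hki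
    have hval : d ≤ ∫ x in I, |x - y| ^ (-s) := by
      rw [hI, MeasureTheory.integral_Icc_eq_integral_Ioc,
        ← intervalIntegral.integral_of_le hll, hkv, hd]
      have hsup := aux_superadd (p := 1 - s) (by linarith) (by linarith)
        (sub_nonneg.mpr hy.1) (sub_nonneg.mpr hy.2)
      rw [show y - lam + (1 - y) = 1 - lam by ring] at hsup
      exact div_le_div_of_nonneg_right hsup h1s.le
    have e : (∫⁻ x in I, F x y)
        = (∫⁻ x in I, ENNReal.ofReal (|x - y| ^ (-s))) * ENNReal.ofReal (g y) :=
      lintegral_mul_const' _ _ ENNReal.ofReal_ne_top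
    rw [e]
    refine mul_le_mul_left ?_ _
    calc ENNReal.ofReal d ≤ ENNReal.ofReal (∫ x in I, |x - y| ^ (-s)) :=
          ENNReal.ofReal_le_ofReal hval
      _ = ∫⁻ x in I, ENNReal.ofReal (|x - y| ^ (-s)) :=
          ofReal_integral_eq_lintegral_ofReal hki'
            (Filter.Eventually.of_forall fun x => Real.rpow_nonneg (abs_nonneg _) _)
  -- lower bound for the double integral
  have hm0 : 0 ≤ m := setIntegral_nonneg measurableSet_Icc fun y _ => hpos y
  have key4 : ENNReal.ofReal d * ENNReal.ofReal m ≤ ∫⁻ y in I, ∫⁻ x in I, F x y := by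
    have e1 : ENNReal.ofReal m = ∫⁻ y in I, ENNReal.ofReal (g y) := by
      rw [hm, ofReal_integral_eq_lintegral_ofReal hint.integrableOn
        (Filter.Eventually.of_forall hpos)]
      apply lintegral_congr_ae
      filter_upwards [hg.restrict (s := I)] with y hy
      rw [hy]
    rw [e1, ← lintegral_const_mul' _ _ ENNReal.ofReal_ne_top]
    refine lintegral_mono_ae ?_
    exact (ae_restrict_iff' measurableSet_Icc).mpr (Filter.Eventually.of_forall key3)
  -- combine in ENNReal, then get the real inequality
  have hcomb : d * m ≤ 3 / (1 - s) * (1 - lam) := by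
    have h5 : ENNReal.ofReal (d * m) ≤ ENNReal.ofReal (3 / (1 - s) * (1 - lam)) := by
      rw [ENNReal.ofReal_mul (le_of_lt hdpos),
        ENNReal.ofReal_mul (le_of_lt (div_pos (by norm_num : (0:ℝ) < 3) h1s))]
      exact le_trans (le_trans key4 hswap.symm.le) key2
    exact (ENNReal.ofReal_le_ofReal_iff
      (mul_nonneg (le_of_lt (div_pos (by norm_num) h1s)) (le_of_lt hε))).mp h5
  -- real arithmetic: m ≤ 3 * (1-lam)^s
  have hmain : m ≤ 3 * (1 - lam) ^ s := by
    have heq : (1 - lam) ^ (1 - s) * (1 - lam) ^ s = 1 - lam := by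
      rw [← Real.rpow_add hε, show 1 - s + s = 1 by ring, Real.rpow_one]
    have hp : 0 < (1 - lam) ^ (1 - s) := Real.rpow_pos_of_pos hε _
    have h6 : (1 - lam) ^ (1 - s) * m ≤ 3 * (1 - lam) := by
      have := mul_le_mul_of_nonneg_left hcomb (le_of_lt h1s)
      rw [hd] at this
      calc (1 - lam) ^ (1 - s) * m
          = (1 - s) * ((1 - lam) ^ (1 - s) / (1 - s) * m) := by field_simp
        _ ≤ (1 - s) * (3 / (1 - s) * (1 - lam)) := this
        _ = 3 * (1 - lam) := by field_simp
    nlinarith [h6, heq, hp]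
  --总 total mass
  have htot : (∫ x, μ x) = (∫ y in J, μ y) + m := by
    rw [← MeasureTheory.setIntegral_eq_integral_of_forall_compl_eq_zero hsupp,
      MeasureTheory.setIntegral_union hdisj measurableSet_Icc
        hint.integrableOn hint.integrableOn, hm]
  rw [htot, hJI]
  linarith
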